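/- Let ρ satisfy (C1)-(C4) and fix t ∈ {0,...,T}. For any stopping time τ with t ≤ τ ≤ T define ρ_τ(X) := Σ_{j=t}^{T} 1_{τ=j} ρ_j(X). Then ρ_τ maps F_T-measurable random variables to F_τ-measurable random variables, and the tower property holds: ρ_t = ρ_t ∘ ρ_τ. -/

import Mathlib

open MeasureTheory

/-- For a DMU `ρ` satisfying (C1)–(C4), fixed `t` and a stopping time `τ` with
`t ≤ τ ≤ T`, the functional `ρ_τ X := ∑_{j=t}^T 1_{τ=j} ρ_j X` maps
`F_T`-measurable random variables to `F_τ`-measurable ones, and the tower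
property `ρ_t = ρ_t ∘ ρ_τ` holds. -/
theorem dmu_stopped_tower
    {Ω : Type*} {m : MeasurableSpace Ω}
    (F : MeasureTheory.Filtration ℕ m) (T t : ℕ) (ht : t ≤ T)
    (ρ : ℕ → (Ω → ℝ) → (Ω → ℝ))
    (hmeas : ∀ s (X : Ω → ℝ), Measurable[F s] (ρ s X))
    (hmono : ∀ s, s ≤ T → ∀ (X Y : Ω → ℝ), X ≤ Y → ρ s X ≤ ρ s Y)
    (hreg : ∀ s, s ≤ T → ∀ (X : Ω → ℝ) (A : Set Ω), MeasurableSet[F s] A →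
      ρ s (A.indicator X) = A.indicator (ρ s X))
    (hrec : ∀ s, s < T → ∀ (X : Ω → ℝ), ρ s (ρ (s + 1) X) = ρ s X)
    (hcti : ∀ s, s ≤ T → ∀ (X Y : Ω → ℝ), Measurable[F s] Y →
      ρ s (X + Y) = ρ s X + Y)
    (τ : Ω → ℕ) (hτ : IsStoppingTime F (fun ω => (τ ω : WithTop ℕ)))
    (hτb : ∀ ω, t ≤ τ ω ∧ τ ω ≤ T) :
    ∀ X : Ω → ℝ, Measurable[F T] X →
      Measurable[hτ.measurableSpace]
        (fun ω => ∑ j ∈ Finset.Icc t T, ({ω' | τ ω' = j}.indicator (ρ j X)) ω) ∧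
      ρ t (fun ω => ∑ j ∈ Finset.Icc t T, ({ω' | τ ω' = j}.indicator (ρ j X)) ω)
        = ρ t X := by
  intro X hX
  -- normalization: ρ s 0 = 0 for s ≤ T
  have hzero : ∀ s, s ≤ T → ρ s (0 : Ω → ℝ) = 0 := by
    intro s hs
    have h := hreg s hs X ∅ (@MeasurableSet.empty Ω (F s))
    rw [Set.indicator_empty, Set.indicator_empty] at h
    exact h
  -- the stopped sum, starting at level s
  set Y : ℕ → Ω → ℝ :=
    fun s ω => ∑ j ∈ Finset.Icc s T, ({ω' | τ ω' = j}.indicator (ρ j X)) ω with hY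
  -- measurability part
  have hmeas_part : Measurable[hτ.measurableSpace] (Y t) := by
    have hprog : ProgMeasurable F (fun j => ρ j X) :=
      StronglyAdapted.isStronglyProgressive_of_discrete (fun j => (hmeas j X).stronglyMeasurable)
    have hsv : stoppedValue (fun j => ρ j X) (fun ω => (τ ω : WithTop ℕ)) = Y t := by
      rw [stoppedValue_eq_of_mem_finset (τ := fun ω => (τ ω : WithTop ℕ)) (s := Finset.Icc t T)
        (fun ω => ⟨τ ω, Finset.mem_Icc.mpr ⟨(hτb ω).1, (hτb ω).2⟩, rfl⟩)]
      funext ω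
      simp [hY, Finset.sum_apply]
    have := measurable_stoppedValue hprog hτ
    rwa [hsv] at this
  refine ⟨hmeas_part, ?_⟩
  -- key downward induction
  have key : ∀ d s, s + d = T → t ≤ s →
      ρ s (Y s) = {ω | s ≤ τ ω}.indicator (ρ s X) := by
    intro d
    induction d with
    | zero =>
      intro s hsT _
      simp only [Nat.add_zero] at hsT
      subst hsT
      have hYT : Y s = {ω | τ ω = s}.indicator (ρ s X) := by
        funext ω
        simp [hY, Finset.Icc_self]
      have hmeasYT : Measurable[F s] (Y s) := by
        rw [hYT]
        exact (hmeas s X).indicator (by simpa using hτ.measurableSet_eq s)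
      have h1 : ρ s (Y s) = Y s := by
        have h := hcti s le_rfl 0 (Y s) hmeasYT
        simpa [hzero s le_rfl] using h
      have hset : {ω : Ω | τ ω = s} = {ω : Ω | s ≤ τ ω} := by
        ext ω
        have := (hτb ω).2
        simp only [Set.mem_setOf_eq]
        omega
      rw [h1, hYT, hset]
    | succ d ih =>
      intro s hsT hts
      have hsT' : s ≤ T := by omega
      have hsltT : s < T := by omega
      -- split Y s = Y (s+1) + 1_{τ=s} ρ s X
      have hsplit : Y s = Y (s + 1) + {ω | τ ω = s}.indicator (ρ s X) := by
        funext ω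
        have hins : Finset.Icc s T = insert s (Finset.Icc (s + 1) T) := by
          ext j; simp [Finset.mem_Icc]; omega
        have hns : s ∉ Finset.Icc (s + 1) T := by simp
        simp only [hY, Pi.add_apply]
        rw [hins, Finset.sum_insert hns]
        ring
      have hind_meas : Measurable[F s] ({ω | τ ω = s}.indicator (ρ s X)) :=
        (hmeas s X).indicator (by simpa using hτ.measurableSet_eq s)
      have h1 : ρ s (Y s) = ρ s (Y (s + 1)) + {ω | τ ω = s}.indicator (ρ s X) := by
        rw [hsplit]
        exact hcti s hsT' (Y (s + 1)) _ hind_meas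
      -- A = {s+1 ≤ τ}, measurable wrt F s
      set A : Set Ω := {ω | s + 1 ≤ τ ω} with hA
      have hAs : MeasurableSet[F s] A := by
        have : A = {ω | τ ω ≤ s}ᶜ := by
          ext ω; simp [hA]
        rw [this]
        exact (by simpa using hτ.measurableSet_le s : MeasurableSet[F s] {ω | τ ω ≤ s}).compl
      have hAs1 : MeasurableSet[F (s + 1)] A := F.mono (Nat.le_succ s) A hAs
      -- IH and regularity
      have h2 : ρ (s + 1) (Y (s + 1)) = ρ (s + 1) (A.indicator X) := by
        rw [ih (s + 1) (by omega) (by omega), hreg (s + 1) (by omega) X A hAs1]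
      have h3 : ρ s (Y (s + 1)) = A.indicator (ρ s X) := by
        rw [← hrec s hsltT (Y (s + 1)), h2, hrec s hsltT, hreg s hsT' X A hAs]
      rw [h1, h3]
      funext ω
      by_cases hω : τ ω = s
      · simp [Set.indicator, hA, hω, Set.mem_setOf_eq]
      · by_cases hω' : s + 1 ≤ τ ω
        · have : s ≤ τ ω := by omega
          simp [Set.indicator, hA, hω, hω', this, Set.mem_setOf_eq]
          exact fun h => absurd h (by omega)
        · have : ¬ s ≤ τ ω := by omega
          simp [Set.indicator, hA, hω, hω', this, Set.mem_setOf_eq]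
          exact fun h => absurd h (by omega)
  have hfinal := key (T - t) t (by omega) le_rfl
  have : {ω | t ≤ τ ω}.indicator (ρ t X) = ρ t X := by
    have : {ω | t ≤ τ ω} = Set.univ := by
      ext ω; simpa using (hτb ω).1
    rw [this, Set.indicator_univ]
  rw [hfinal, this]
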